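/- Let G be a finite simple graph with vertex set V. For every vertex v: the sum over all neighbors a of v of n2c(v,a) · n3(v,a) equals 2·F8'(v) + 2·F9'(v). -/

import Mathlib

open Finset
open scoped Classical

namespace FourProfiles

variable {V : Type*} [Fintype V] [DecidableEq V]

/-- Number of 3-element subsets of `V \ {v}` admitting a labeling `a, b, c` satisfying `P`. -/
noncomputable def cnt3 (v : V) (P : V → V → V → Prop) : ℕ :=
  (((Finset.univ : Finset V).powersetCard 3).filter
    (fun s => v ∉ s ∧ ∃ a ∈ s, ∃ b ∈ s, ∃ c ∈ s, s = {a, b, c} ∧ P a b c)).card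

variable (G : SimpleGraph V)

/-- Induced subgraph on `{v,a,b,c}` has exactly one edge, with `v` an endpoint. -/
noncomputable def F1 (v : V) : ℕ := cnt3 v fun a b c =>
  G.Adj v a ∧ ¬G.Adj v b ∧ ¬G.Adj v c ∧ ¬G.Adj a b ∧ ¬G.Adj a c ∧ ¬G.Adj b c

/-- Induced subgraph on `{v,a,b,c}` is a perfect matching (two disjoint edges). -/
noncomputable def F2 (v : V) : ℕ := cnt3 v fun a b c =>
  G.Adj v a ∧ G.Adj b c ∧ ¬G.Adj v b ∧ ¬G.Adj v c ∧ ¬G.Adj a b ∧ ¬G.Adj a c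

/-- Two-edge path plus isolated vertex, `v` an endpoint of the path. -/
noncomputable def F3 (v : V) : ℕ := cnt3 v fun a b c =>
  G.Adj v a ∧ G.Adj a b ∧ ¬G.Adj v b ∧ ¬G.Adj v c ∧ ¬G.Adj a c ∧ ¬G.Adj b c

/-- Two-edge path plus isolated vertex, `v` the middle vertex of the path. -/
noncomputable def F3' (v : V) : ℕ := cnt3 v fun a b c =>
  G.Adj v a ∧ G.Adj v b ∧ ¬G.Adj a b ∧ ¬G.Adj v c ∧ ¬G.Adj a c ∧ ¬G.Adj b c

/-- Path on four vertices, `v` an endpoint. -/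
noncomputable def F4 (v : V) : ℕ := cnt3 v fun a b c =>
  G.Adj v a ∧ G.Adj a b ∧ G.Adj b c ∧ ¬G.Adj v b ∧ ¬G.Adj v c ∧ ¬G.Adj a c

/-- Path on four vertices, `v` an internal (degree-2) vertex. -/
noncomputable def F4' (v : V) : ℕ := cnt3 v fun a b c =>
  G.Adj v a ∧ G.Adj v b ∧ G.Adj b c ∧ ¬G.Adj a b ∧ ¬G.Adj v c ∧ ¬G.Adj a c

/-- Triangle plus isolated vertex, `v` in the triangle. -/
noncomputable def F5 (v : V) : ℕ := cnt3 v fun a b c =>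
  G.Adj v a ∧ G.Adj v b ∧ G.Adj a b ∧ ¬G.Adj v c ∧ ¬G.Adj a c ∧ ¬G.Adj b c

/-- Star `K_{1,3}`, `v` a leaf. -/
noncomputable def F6 (v : V) : ℕ := cnt3 v fun a b c =>
  G.Adj v a ∧ G.Adj a b ∧ G.Adj a c ∧ ¬G.Adj v b ∧ ¬G.Adj v c ∧ ¬G.Adj b c

/-- Star `K_{1,3}`, `v` the center. -/
noncomputable def F6' (v : V) : ℕ := cnt3 v fun a b c =>
  G.Adj v a ∧ G.Adj v b ∧ G.Adj v c ∧ ¬G.Adj a b ∧ ¬G.Adj a c ∧ ¬G.Adj b c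

/-- 4-cycle. -/
noncomputable def F7 (v : V) : ℕ := cnt3 v fun a b c =>
  G.Adj v a ∧ G.Adj a b ∧ G.Adj b c ∧ G.Adj v c ∧ ¬G.Adj v b ∧ ¬G.Adj a c

/-- Paw (triangle with a pendant edge), `v` the pendant (degree-1) vertex. -/
noncomputable def F8 (v : V) : ℕ := cnt3 v fun a b c =>
  G.Adj v a ∧ G.Adj a b ∧ G.Adj a c ∧ G.Adj b c ∧ ¬G.Adj v b ∧ ¬G.Adj v c

/-- Paw, `v` the degree-3 vertex. -/
noncomputable def F8' (v : V) : ℕ := cnt3 v fun a b c =>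
  G.Adj v a ∧ G.Adj v b ∧ G.Adj a b ∧ G.Adj v c ∧ ¬G.Adj a c ∧ ¬G.Adj b c

/-- Paw, `v` one of the two degree-2 vertices. -/
noncomputable def F8'' (v : V) : ℕ := cnt3 v fun a b c =>
  G.Adj v a ∧ G.Adj v b ∧ G.Adj a b ∧ G.Adj a c ∧ ¬G.Adj v c ∧ ¬G.Adj b c

/-- Diamond (`K4` minus one edge), `v` one of the two degree-2 vertices. -/
noncomputable def F9 (v : V) : ℕ := cnt3 v fun a b c =>
  G.Adj v a ∧ G.Adj v b ∧ G.Adj a b ∧ G.Adj a c ∧ G.Adj b c ∧ ¬G.Adj v c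

/-- Diamond, `v` one of the two degree-3 vertices. -/
noncomputable def F9' (v : V) : ℕ := cnt3 v fun a b c =>
  G.Adj v a ∧ G.Adj v b ∧ G.Adj v c ∧ G.Adj a b ∧ G.Adj a c ∧ ¬G.Adj b c

/-- Complete graph `K4`. -/
noncomputable def F10 (v : V) : ℕ := cnt3 v fun a b c =>
  G.Adj v a ∧ G.Adj v b ∧ G.Adj v c ∧ G.Adj a b ∧ G.Adj a c ∧ G.Adj b c

/-- `|V \ (Γ(v) ∪ Γ(a))|`. -/
noncomputable def n1e (v a : V) : ℕ :=
  (Finset.univ.filter fun x => ¬G.Adj v x ∧ ¬G.Adj a x).card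

/-- `|Γ(v) \ (Γ(a) ∪ {a})|`. -/
noncomputable def n2c (v a : V) : ℕ :=
  (Finset.univ.filter fun x => G.Adj v x ∧ ¬G.Adj a x ∧ x ≠ a).card

/-- `|Γ(a) \ (Γ(v) ∪ {v})|`. -/
noncomputable def n2e (v a : V) : ℕ :=
  (Finset.univ.filter fun x => G.Adj a x ∧ ¬G.Adj v x ∧ x ≠ v).card

/-- `|Γ(v) ∩ Γ(a)|`. -/
noncomputable def n3 (v a : V) : ℕ :=
  (Finset.univ.filter fun x => G.Adj v x ∧ G.Adj a x).card

/-- Number of edges of `G` with neither endpoint in `Γ(v) ∪ {v}`. -/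
noncomputable def n1d (v : V) : ℕ :=
  (((Finset.univ : Finset V).powersetCard 2).filter
    (fun s => ∃ a ∈ s, ∃ b ∈ s, s = {a, b} ∧ G.Adj a b ∧
      ¬G.Adj v a ∧ ¬G.Adj v b ∧ a ≠ v ∧ b ≠ v)).card

/-- Number of triangles of `G` containing `a`. -/
noncomputable def tri (a : V) : ℕ :=
  (((Finset.univ : Finset V).powersetCard 2).filter
    (fun s => ∃ x ∈ s, ∃ y ∈ s, s = {x, y} ∧ G.Adj a x ∧ G.Adj a y ∧ G.Adj x y)).card

/-- Number of 2-element subsets `{x,y}` of `V \ {a}` inducing a two-edge path with `a`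
an endpoint. -/
noncomputable def twoPathEnd (a : V) : ℕ :=
  (((Finset.univ : Finset V).powersetCard 2).filter
    (fun s => a ∉ s ∧ ∃ x ∈ s, ∃ y ∈ s, s = {x, y} ∧ G.Adj a x ∧ G.Adj x y ∧ ¬G.Adj a y)).card

/-- Number of 2-element subsets `{b,c} ⊆ Γ(a)` with `b` adjacent to `c`, `b ∈ Γ(v)`,
`c ∈ Γ(v)`. -/
noncomputable def triIn (v a : V) : ℕ :=
  (((Finset.univ : Finset V).powersetCard 2).filter
    (fun s => ∃ b ∈ s, ∃ c ∈ s, s = {b, c} ∧ G.Adj a b ∧ G.Adj a c ∧ G.Adj b c ∧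
      G.Adj v b ∧ G.Adj v c)).card

/-- Number of 2-element subsets `{b,c} ⊆ Γ(a)` with `b` adjacent to `c`, `b ∉ Γ(v)`,
`c ∉ Γ(v)`. -/
noncomputable def triOut (v a : V) : ℕ :=
  (((Finset.univ : Finset V).powersetCard 2).filter
    (fun s => ∃ b ∈ s, ∃ c ∈ s, s = {b, c} ∧ G.Adj a b ∧ G.Adj a c ∧ G.Adj b c ∧
      ¬G.Adj v b ∧ ¬G.Adj v c)).card

lemma distinct_of_card3 {a b c : V} (h : ({a, b, c} : Finset V).card = 3) :
    a ≠ b ∧ a ≠ c ∧ b ≠ c := by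
  refine ⟨?_, ?_, ?_⟩ <;> rintro rfl
  · have hsub : ({a, a, c} : Finset V) ⊆ {a, c} := by intro w hw; simp at hw ⊢; tauto
    have h2 := Finset.card_insert_le a ({c} : Finset V)
    have h3 := Finset.card_le_card hsub
    simp only [Finset.card_singleton] at h2
    omega
  · have hsub : ({a, b, a} : Finset V) ⊆ {a, b} := by intro w hw; simp at hw ⊢; tauto
    have h2 := Finset.card_insert_le a ({b} : Finset V)
    have h3 := Finset.card_le_card hsub
    simp only [Finset.card_singleton] at h2
    omega
  · have hsub : ({a, b, b} : Finset V) ⊆ {a, b} := by intro w hw; simp at hw ⊢; tauto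
    have h2 := Finset.card_insert_le a ({b} : Finset V)
    have h3 := Finset.card_le_card hsub
    simp only [Finset.card_singleton] at h2
    omega

lemma filter_inst {α : Type*} (p : α → Prop) (h1 h2 : DecidablePred p) (s : Finset α) :
    @Finset.filter α p h1 s = @Finset.filter α p h2 s := by
  congr 1

set_option maxHeartbeats 1000000 in
theorem statement9 [DecidableRel G.Adj] (v : V) :
    ∑ a ∈ G.neighborFinset v, n2c G v a * n3 G v a = 2 * F8' G v + 2 * F9' G v := by
  classical
  set T : Finset ((_ : V) × V × V) :=
    (G.neighborFinset v).sigma (fun a =>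
      (univ.filter fun b => G.Adj v b ∧ ¬G.Adj a b ∧ b ≠ a) ×ˢ
      (univ.filter fun c => G.Adj v c ∧ G.Adj a c)) with hTdef
  have hLHS : ∑ a ∈ G.neighborFinset v, n2c G v a * n3 G v a = T.card := by
    rw [hTdef, Finset.card_sigma]
    refine Finset.sum_congr rfl fun a _ => ?_
    rw [Finset.card_product, n2c, n3]
    congr!
  set T1 : Finset ((_ : V) × V × V) := T.filter (fun p => ¬G.Adj p.2.1 p.2.2) with hT1def
  set T2 : Finset ((_ : V) × V × V) := T.filter (fun p => G.Adj p.2.1 p.2.2) with hT2def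
  have hsplit : T.card = T1.card + T2.card := by
    rw [hT1def, hT2def, add_comm]
    exact (Finset.card_filter_add_card_filter_not _).symm
  set S8 : Finset (Finset V) := ((Finset.univ : Finset V).powersetCard 3).filter
    (fun s => v ∉ s ∧ ∃ a ∈ s, ∃ b ∈ s, ∃ c ∈ s, s = {a, b, c} ∧
      (G.Adj v a ∧ G.Adj v b ∧ G.Adj a b ∧ G.Adj v c ∧ ¬G.Adj a c ∧ ¬G.Adj b c)) with hS8def
  set S9 : Finset (Finset V) := ((Finset.univ : Finset V).powersetCard 3).filter
    (fun s => v ∉ s ∧ ∃ a ∈ s, ∃ b ∈ s, ∃ c ∈ s, s = {a, b, c} ∧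
      (G.Adj v a ∧ G.Adj v b ∧ G.Adj v c ∧ G.Adj a b ∧ G.Adj a c ∧ ¬G.Adj b c)) with hS9def
  have hF8 : F8' G v = S8.card := by
    rw [hS8def]; unfold F8' cnt3
    exact congrArg Finset.card (filter_inst _ _ _ _)
  have hF9 : F9' G v = S9.card := by
    rw [hS9def]; unfold F9' cnt3
    exact congrArg Finset.card (filter_inst _ _ _ _)
  have memT : ∀ x y z : V, (⟨x, (y, z)⟩ : (_ : V) × V × V) ∈ T ↔
      (G.Adj v x ∧ (G.Adj v y ∧ ¬G.Adj x y ∧ y ≠ x) ∧ (G.Adj v z ∧ G.Adj x z)) := by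
    intro x y z
    simp [hTdef, Finset.mem_sigma, Finset.mem_product]
  -- T1 fibers over S8
  have hmap1 : ∀ p ∈ T1, ({p.1, p.2.1, p.2.2} : Finset V) ∈ S8 := by
    rintro ⟨x, y, z⟩ hp
    rw [hT1def, Finset.mem_filter] at hp
    obtain ⟨hpT, hyz⟩ := hp
    rw [memT] at hpT
    obtain ⟨hvx, ⟨hvy, hxy, hyx⟩, hvz, hxz⟩ := hpT
    have hzx : z ≠ x := hxz.ne'
    have hzy : z ≠ y := fun h => hxy (h ▸ hxz)
    have hcard : ({x, y, z} : Finset V).card = 3 := by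
      rw [Finset.card_insert_of_notMem (by simp [hyx.symm, hzx.symm]),
        Finset.card_insert_of_notMem (by simp [hzy.symm]), Finset.card_singleton]
    rw [hS8def, Finset.mem_filter, Finset.mem_powersetCard_univ]
    refine ⟨hcard, ?_, x, by simp, z, by simp, y, by simp, ?_, hvx, hvz, hxz, hvy, hxy,
      fun h => hyz h.symm⟩
    · simp only [Finset.mem_insert, Finset.mem_singleton]
      push_neg
      exact ⟨hvx.ne, hvy.ne, hvz.ne⟩
    · ext w; simp; tauto
  have hfib1 : ∀ s ∈ S8, (T1.filter fun p => ({p.1, p.2.1, p.2.2} : Finset V) = s).card = 2 := by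
    intro s hs
    rw [hS8def, Finset.mem_filter, Finset.mem_powersetCard_univ] at hs
    obtain ⟨hcard, hvs, a, -, b, -, c, -, hsabc, hva, hvb, hab, hvc, hac, hbc⟩ := hs
    subst hsabc
    obtain ⟨hab', hac', hbc'⟩ := distinct_of_card3 hcard
    have hab2 : G.Adj b a := hab.symm
    have hac2 : ¬G.Adj c a := fun h => hac h.symm
    have hbc2 : ¬G.Adj c b := fun h => hbc h.symm
    have : (T1.filter fun p => ({p.1, p.2.1, p.2.2} : Finset V) = {a, b, c}) =
        ({⟨a, (c, b)⟩, ⟨b, (c, a)⟩} : Finset ((_ : V) × V × V)) := by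
      ext ⟨x, y, z⟩
      simp only [Finset.mem_filter, hT1def, memT, Finset.mem_insert, Finset.mem_singleton]
      constructor
      · rintro ⟨⟨⟨hvx, ⟨hvy, hxy, hyx⟩, hvz, hxz⟩, hyz⟩, hset⟩
        have hzx : z ≠ x := hxz.ne'
        have hzy : z ≠ y := fun h => hxy (h ▸ hxz)
        have hxm : x ∈ ({a, b, c} : Finset V) := by rw [← hset]; simp
        have hym : y ∈ ({a, b, c} : Finset V) := by rw [← hset]; simp
        have hzm : z ∈ ({a, b, c} : Finset V) := by rw [← hset]; simp
        simp only [Finset.mem_insert, Finset.mem_singleton] at hxm hym hzm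
        rcases hxm with rfl | rfl | rfl <;> rcases hym with rfl | rfl | rfl <;>
          rcases hzm with rfl | rfl | rfl <;> simp_all
      · rintro (h | h) <;>
        · obtain ⟨rfl, rfl, rfl⟩ : _ ∧ _ ∧ _ :=
            ⟨congrArg Sigma.fst h, congrArg (fun p => p.2.1) h,
              congrArg (fun p => p.2.2) h⟩
          refine ⟨⟨⟨?_, ⟨?_, ?_, ?_⟩, ?_, ?_⟩, ?_⟩, ?_⟩ <;>
            first
              | assumption
              | exact hac'.symm
              | exact hbc'.symm
              | (ext w; simp; tauto)
    rw [this, Finset.card_insert_of_notMem (by simp [hab']), Finset.card_singleton]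
  -- T2 fibers over S9
  have hmap2 : ∀ p ∈ T2, ({p.1, p.2.1, p.2.2} : Finset V) ∈ S9 := by
    rintro ⟨x, y, z⟩ hp
    rw [hT2def, Finset.mem_filter] at hp
    obtain ⟨hpT, hyz⟩ := hp
    rw [memT] at hpT
    obtain ⟨hvx, ⟨hvy, hxy, hyx⟩, hvz, hxz⟩ := hpT
    have hzx : z ≠ x := hxz.ne'
    have hzy : z ≠ y := fun h => hxy (h ▸ hxz)
    have hcard : ({x, y, z} : Finset V).card = 3 := by
      rw [Finset.card_insert_of_notMem (by simp [hyx.symm, hzx.symm]),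
        Finset.card_insert_of_notMem (by simp [hzy.symm]), Finset.card_singleton]
    rw [hS9def, Finset.mem_filter, Finset.mem_powersetCard_univ]
    refine ⟨hcard, ?_, z, by simp, x, by simp, y, by simp, ?_, hvz, hvx, hvy, hxz.symm,
      hyz.symm, hxy⟩
    · simp only [Finset.mem_insert, Finset.mem_singleton]
      push_neg
      exact ⟨hvx.ne, hvy.ne, hvz.ne⟩
    · ext w; simp; tauto
  have hfib2 : ∀ s ∈ S9, (T2.filter fun p => ({p.1, p.2.1, p.2.2} : Finset V) = s).card = 2 := by
    intro s hs
    rw [hS9def, Finset.mem_filter, Finset.mem_powersetCard_univ] at hs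
    obtain ⟨hcard, hvs, a, -, b, -, c, -, hsabc, hva, hvb, hvc, hab, hac, hbc⟩ := hs
    subst hsabc
    obtain ⟨hab', hac', hbc'⟩ := distinct_of_card3 hcard
    have hab2 : G.Adj b a := hab.symm
    have hac2 : G.Adj c a := hac.symm
    have hbc2 : ¬G.Adj c b := fun h => hbc h.symm
    have : (T2.filter fun p => ({p.1, p.2.1, p.2.2} : Finset V) = {a, b, c}) =
        ({⟨b, (c, a)⟩, ⟨c, (b, a)⟩} : Finset ((_ : V) × V × V)) := by
      ext ⟨x, y, z⟩
      simp only [Finset.mem_filter, hT2def, memT, Finset.mem_insert, Finset.mem_singleton]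
      constructor
      · rintro ⟨⟨⟨hvx, ⟨hvy, hxy, hyx⟩, hvz, hxz⟩, hyz⟩, hset⟩
        have hzx : z ≠ x := hxz.ne'
        have hzy : z ≠ y := fun h => hxy (h ▸ hxz)
        have hxm : x ∈ ({a, b, c} : Finset V) := by rw [← hset]; simp
        have hym : y ∈ ({a, b, c} : Finset V) := by rw [← hset]; simp
        have hzm : z ∈ ({a, b, c} : Finset V) := by rw [← hset]; simp
        simp only [Finset.mem_insert, Finset.mem_singleton] at hxm hym hzm
        rcases hxm with rfl | rfl | rfl <;> rcases hym with rfl | rfl | rfl <;>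
          rcases hzm with rfl | rfl | rfl <;> (clear hfib1 hmap1 hmap2; simp_all)
      · rintro (h | h) <;>
        · obtain ⟨rfl, rfl, rfl⟩ : _ ∧ _ ∧ _ :=
            ⟨congrArg Sigma.fst h, congrArg (fun p => p.2.1) h,
              congrArg (fun p => p.2.2) h⟩
          refine ⟨⟨⟨?_, ⟨?_, ?_, ?_⟩, ?_, ?_⟩, ?_⟩, ?_⟩ <;>
            first
              | assumption
              | exact hbc'
              | exact hbc'.symm
              | (ext w; simp; tauto)
    rw [this, Finset.card_insert_of_notMem (by simp [hbc']), Finset.card_singleton]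
  have h1 : T1.card = 2 * S8.card := by
    rw [Finset.card_eq_sum_card_fiberwise hmap1, Finset.sum_congr rfl hfib1,
      Finset.sum_const, smul_eq_mul, mul_comm]
  have h2 : T2.card = 2 * S9.card := by
    rw [Finset.card_eq_sum_card_fiberwise hmap2, Finset.sum_congr rfl hfib2,
      Finset.sum_const, smul_eq_mul, mul_comm]
  rw [hLHS, hsplit, h1, h2, hF8, hF9]

end FourProfiles
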